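/- Let b > 0 and let A ∈ ℝ^{d×N} be a real matrix such that ⟪A Aᵀ v, v⟫ = b‖v‖² for every v ∈ ℝ^d (in particular A Aᵀ is invertible), and let B := Aᵀ (A Aᵀ)⁻¹. Then for all y ∈ ℝ^N and g ∈ ℝ^d: ‖A y − g‖² = b (‖y − B g‖² − ‖y − B (A y)‖²). Consequently, for fixed y the maps g ↦ ‖A y − g‖² and g ↦ ‖y − B g‖² differ by a positive scalar multiple and an additive constant, so they have the same minimizers. -/

import Mathlib

open Matrix BigOperators

lemma aux_diag {d : ℕ} (M : Matrix (Fin d) (Fin d) ℝ) (b : ℝ)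
    (h : ∀ v : Fin d → ℝ, (M *ᵥ v) ⬝ᵥ v = b * (∑ i, v i ^ 2))
    (hsym : Mᵀ = M) : M = b • (1 : Matrix (Fin d) (Fin d) ℝ) := by
  ext i j
  have hd : ∀ k, M k k = b := by
    intro k
    have := h (Pi.single k 1)
    simpa [mulVec, dotProduct, Pi.single_apply, mul_ite, ite_mul,
      Finset.sum_ite_eq', sq] using this
  rcases eq_or_ne i j with rfl | hij
  · simp [hd i, Matrix.one_apply]
  · have := h (Pi.single i 1 + Pi.single j 1)
    have hs : M j i = M i j := by
      have := congrFun (congrFun hsym i) j; simpa [Matrix.transpose_apply] using this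
    simp only [mulVec, dotProduct, Pi.add_apply, Pi.single_apply, mul_ite, ite_mul,
      mul_one, mul_zero, one_mul, zero_mul, Finset.sum_ite_eq', Finset.mem_univ, if_true,
      add_mul, mul_add, sq] at this
    simp [Finset.sum_add_distrib, Finset.sum_ite_eq', hij, hij.symm, hd i, hd j, hs,
      Matrix.one_apply, mul_add] at this ⊢
    linarith

/-- **Equality case `b1 = b2 = b` of Theorem 1 of the paper.** If `⟪A Aᵀ v, v⟫ = b‖v‖²` for
every `v`, then `‖A y − g‖² = b (‖y − B g‖² − ‖y − B (A y)‖²)`; consequently, for fixed `y`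
the maps `g ↦ ‖A y − g‖²` and `g ↦ ‖y − B g‖²` have the same minimizers. -/
theorem stmt_6 {d N : ℕ}
    (b : ℝ) (hb : 0 < b)
    (A : Matrix (Fin d) (Fin N) ℝ)
    (hA : ∀ v : Fin d → ℝ, ((A * Aᵀ) *ᵥ v) ⬝ᵥ v = b * (∑ i, v i ^ 2))
    (B : Matrix (Fin N) (Fin d) ℝ) (hB : B = Aᵀ * (A * Aᵀ)⁻¹) :
    (∀ (y : Fin N → ℝ) (g : Fin d → ℝ),
      ∑ i, ((A *ᵥ y) i - g i) ^ 2
        = b * ((∑ j, (y j - (B *ᵥ g) j) ^ 2) - ∑ j, (y j - (B *ᵥ (A *ᵥ y)) j) ^ 2)) ∧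
    (∀ (y : Fin N → ℝ) (g : Fin d → ℝ),
      (∀ g' : Fin d → ℝ, ∑ i, ((A *ᵥ y) i - g i) ^ 2 ≤ ∑ i, ((A *ᵥ y) i - g' i) ^ 2) ↔
      (∀ g' : Fin d → ℝ, ∑ j, (y j - (B *ᵥ g) j) ^ 2 ≤ ∑ j, (y j - (B *ᵥ g') j) ^ 2)) := by
  have hb0 : b ≠ 0 := ne_of_gt hb
  have hsym : (A * Aᵀ)ᵀ = A * Aᵀ := by
    rw [Matrix.transpose_mul, Matrix.transpose_transpose]
  have hM : A * Aᵀ = b • (1 : Matrix (Fin d) (Fin d) ℝ) := aux_diag _ b hA hsym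
  have hinv : (A * Aᵀ)⁻¹ = b⁻¹ • (1 : Matrix (Fin d) (Fin d) ℝ) := by
    apply Matrix.inv_eq_right_inv
    rw [hM, Matrix.smul_mul, Matrix.mul_smul, Matrix.one_mul, smul_smul,
      mul_inv_cancel₀ hb0, one_smul]
  have hBg : ∀ g : Fin d → ℝ, B *ᵥ g = b⁻¹ • (Aᵀ *ᵥ g) := by
    intro g
    rw [hB, hinv, Matrix.mul_smul, Matrix.mul_one, Matrix.smul_mulVec]
  -- key dot product facts
  have hAt : ∀ (g : Fin d → ℝ) (y : Fin N → ℝ), (Aᵀ *ᵥ g) ⬝ᵥ y = g ⬝ᵥ (A *ᵥ y) := by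
    intro g y
    rw [Matrix.mulVec_transpose, ← Matrix.dotProduct_mulVec]
  have hnorm : ∀ g : Fin d → ℝ, (Aᵀ *ᵥ g) ⬝ᵥ (Aᵀ *ᵥ g) = b * (g ⬝ᵥ g) := by
    intro g
    have h1 : (Aᵀ *ᵥ g) ⬝ᵥ (Aᵀ *ᵥ g) = ((A * Aᵀ) *ᵥ g) ⬝ᵥ g := by
      rw [← Matrix.mulVec_mulVec, dotProduct_comm, Matrix.dotProduct_mulVec,
        Matrix.vecMul_transpose]
    rw [h1, hA g, dotProduct]
    congr 1
    exact Finset.sum_congr rfl fun i _ => sq (g i)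
  -- main identity
  have main : ∀ (y : Fin N → ℝ) (g : Fin d → ℝ),
      ∑ i, ((A *ᵥ y) i - g i) ^ 2
        = b * ((∑ j, (y j - (B *ᵥ g) j) ^ 2) - ∑ j, (y j - (B *ᵥ (A *ᵥ y)) j) ^ 2) := by
    intro y g
    set u := A *ᵥ y with hu
    have expand1 : ∑ i, (u i - g i) ^ 2 = u ⬝ᵥ u - 2 * (g ⬝ᵥ u) + g ⬝ᵥ g := by
      simp only [dotProduct, ← Finset.sum_add_distrib, ← Finset.sum_sub_distrib,
        Finset.mul_sum]
      exact Finset.sum_congr rfl fun i _ => by ring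
    have expand2 : ∀ w : Fin d → ℝ,
        ∑ j, (y j - (B *ᵥ w) j) ^ 2
          = y ⬝ᵥ y - 2 * b⁻¹ * (w ⬝ᵥ u) + b⁻¹ * (w ⬝ᵥ w) := by
      intro w
      have e1 : ∀ j, (B *ᵥ w) j = b⁻¹ * (Aᵀ *ᵥ w) j := by
        intro j; rw [hBg w]; simp
      have e2 : (Aᵀ *ᵥ w) ⬝ᵥ y = w ⬝ᵥ u := by rw [hAt w y, hu]
      have e3 : (Aᵀ *ᵥ w) ⬝ᵥ (Aᵀ *ᵥ w) = b * (w ⬝ᵥ w) := hnorm w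
      simp only [dotProduct] at e2 e3 ⊢
      calc ∑ j, (y j - (B *ᵥ w) j) ^ 2
          = ∑ j, (y j * y j - 2 * b⁻¹ * ((Aᵀ *ᵥ w) j * y j)
              + b⁻¹ * b⁻¹ * ((Aᵀ *ᵥ w) j * (Aᵀ *ᵥ w) j)) := by
            exact Finset.sum_congr rfl fun j _ => by rw [e1 j]; ring
        _ = ∑ j, y j * y j - 2 * b⁻¹ * ∑ j, (Aᵀ *ᵥ w) j * y j
              + b⁻¹ * b⁻¹ * ∑ j, (Aᵀ *ᵥ w) j * (Aᵀ *ᵥ w) j := by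
            rw [Finset.sum_add_distrib, Finset.sum_sub_distrib, ← Finset.mul_sum,
              ← Finset.mul_sum]
        _ = ∑ j, y j * y j - 2 * b⁻¹ * ∑ i, w i * u i
              + b⁻¹ * ∑ i, w i * w i := by
            rw [e2, e3]; field_simp
    rw [expand1, expand2 g, expand2 u]
    have : g ⬝ᵥ u = u ⬝ᵥ g := dotProduct_comm g u
    simp only [dotProduct] at this ⊢
    field_simp
    ring
  refine ⟨main, fun y g => ?_⟩
  constructor
  · intro h g'
    have h1 := main y g
    have h2 := main y g'
    have := h g'
    rw [h1, h2] at this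
    have := (mul_le_mul_iff_right₀ hb).mp this
    linarith
  · intro h g'
    rw [main y g, main y g']
    have := h g'
    have hle : (∑ j, (y j - (B *ᵥ g) j) ^ 2) - ∑ j, (y j - (B *ᵥ (A *ᵥ y)) j) ^ 2
        ≤ (∑ j, (y j - (B *ᵥ g') j) ^ 2) - ∑ j, (y j - (B *ᵥ (A *ᵥ y)) j) ^ 2 := by
      linarith
    exact mul_le_mul_of_nonneg_left hle hb.le
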